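/- Let V be a finite-dimensional normed ℚ_p-vector space and let L be a ℤ_p-lattice of rank n in V. If α_1, …, α_n and β_1, …, β_n are two orthogonal bases of L with |α_1| ≥ ⋯ ≥ |α_n| and |β_1| ≥ ⋯ ≥ |β_n|, then |α_i| = |β_i| for all 1 ≤ i ≤ n. -/

import Mathlib

private theorem stmt5_aux {p : ℕ} [Fact p.Prime] {V : Type*} [AddCommGroup V] [Module ℚ_[p] V]
    (N : V → ℝ)
    (hnonneg : ∀ v, 0 ≤ N v)
    (hzero : ∀ v, N v = 0 ↔ v = 0)
    (hsmul : ∀ (x : ℚ_[p]) (v : V), N (x • v) = ‖x‖ * N v)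
    {n : ℕ} (hn : 0 < n) (α β : Fin n → V)
    (hαindep : LinearIndependent ℚ_[p] α)
    (hlat : (Set.range fun a : Fin n → ℤ_[p] => ∑ i, ((a i : ℚ_[p])) • α i)
          = (Set.range fun a : Fin n → ℤ_[p] => ∑ i, ((a i : ℚ_[p])) • β i))
    (hαorth : ∀ a : Fin n → ℚ_[p],
        N (∑ i, a i • α i) =
          Finset.univ.sup' ⟨⟨0, hn⟩, Finset.mem_univ _⟩ (fun i => N (a i • α i)))
    (hαsort : ∀ i j : Fin n, i ≤ j → N (α j) ≤ N (α i))
    (hβsort : ∀ i j : Fin n, i ≤ j → N (β j) ≤ N (β i)) :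
    ∀ i, N (α i) ≤ N (β i) := by
  -- self-membership of a lattice generator
  have hself : ∀ (γ : Fin n → V) (j : Fin n),
      γ j ∈ Set.range fun a : Fin n → ℤ_[p] => ∑ i, ((a i : ℚ_[p])) • γ i := by
    intro γ j
    refine ⟨Pi.single j 1, ?_⟩
    simp [Pi.single_apply, apply_ite (fun z : ℤ_[p] => (z : ℚ_[p])), ite_smul]
  -- coefficients c : β in terms of α, d : α in terms of β
  have hβmem : ∀ j, ∃ a : Fin n → ℤ_[p], β j = ∑ i, ((a i : ℚ_[p])) • α i := by
    intro j
    have h := hself β j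
    rw [← hlat] at h
    obtain ⟨a, ha⟩ := h
    exact ⟨a, ha.symm⟩
  have hαmem : ∀ j, ∃ a : Fin n → ℤ_[p], α j = ∑ i, ((a i : ℚ_[p])) • β i := by
    intro j
    have h := hself α j
    rw [hlat] at h
    obtain ⟨a, ha⟩ := h
    exact ⟨a, ha.symm⟩
  choose c hc using hβmem
  choose d hd using hαmem
  -- D * C = 1
  have hDC : (Matrix.of d * Matrix.of c : Matrix (Fin n) (Fin n) ℤ_[p]) = 1 := by
    ext j m
    have hexp : α j = ∑ m, (∑ k, ((d j k : ℚ_[p]) * (c k m : ℚ_[p]))) • α m := by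
      rw [hd j]
      simp_rw [hc, Finset.smul_sum, smul_smul]
      rw [Finset.sum_comm]
      simp_rw [Finset.sum_smul]
    have h0 : ∑ m, ((∑ k, ((d j k : ℚ_[p]) * (c k m : ℚ_[p]))) -
        (if m = j then 1 else 0)) • α m = 0 := by
      simp only [sub_smul, Finset.sum_sub_distrib, ← hexp, ite_smul, one_smul, zero_smul,
        Finset.sum_ite_eq', Finset.mem_univ, if_true, sub_self]
    have hz := Fintype.linearIndependent_iff.mp hαindep _ h0 m
    rw [sub_eq_zero] at hz
    have hcoe : ((∑ k, d j k * c k m : ℤ_[p]) : ℚ_[p])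
        = (((if m = j then 1 else 0) : ℤ_[p]) : ℚ_[p]) := by
      have hL : ((∑ k, d j k * c k m : ℤ_[p]) : ℚ_[p])
          = ∑ k, ((d j k : ℚ_[p]) * (c k m : ℚ_[p])) := by
        rw [show ((∑ k, d j k * c k m : ℤ_[p]) : ℚ_[p])
            = PadicInt.Coe.ringHom (∑ k, d j k * c k m) from rfl, map_sum]
        rfl
      rw [hL, hz]
      split <;> simp
    have hzz : ∑ k, d j k * c k m = (if m = j then 1 else 0) := Subtype.coe_injective hcoe
    simp only [Matrix.mul_apply, Matrix.of_apply, Matrix.one_apply, hzz]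
    by_cases h : j = m <;> simp [h, eq_comm]
  -- hence det C is a unit
  have hCD : (Matrix.of c * Matrix.of d : Matrix (Fin n) (Fin n) ℤ_[p]) = 1 :=
    mul_eq_one_comm.mp hDC
  have hunit : IsUnit (Matrix.of c : Matrix (Fin n) (Fin n) ℤ_[p]).det := by
    apply IsUnit.of_mul_eq_one (Matrix.of d : Matrix (Fin n) (Fin n) ℤ_[p]).det
    rw [← Matrix.det_mul, hCD, Matrix.det_one]
  have hnorm1 : ‖(Matrix.of c : Matrix (Fin n) (Fin n) ℤ_[p]).det‖ = 1 :=
    PadicInt.isUnit_iff.mp hunit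
  -- positivity of N (α k)
  have hαpos : ∀ k, 0 < N (α k) := by
    intro k
    rcases (hnonneg (α k)).lt_or_eq with h | h
    · exact h
    · exact absurd ((hzero _).mp h.symm) (hαindep.ne_zero k)
  -- main argument
  by_contra hcon
  push_neg at hcon
  obtain ⟨i₀, hi₀⟩ := hcon
  have hsmall : ∀ j k, i₀ ≤ j → k ≤ i₀ → (p : ℤ_[p]) ∣ c j k := by
    intro j k hj hk
    rw [← PadicInt.norm_lt_one_iff_dvd]
    have h1 : N (((c j k : ℚ_[p])) • α k) ≤ N (β j) := by
      rw [hc j, hαorth]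
      exact Finset.le_sup' (fun i => N ((c j i : ℚ_[p]) • α i)) (Finset.mem_univ k)
    rw [hsmul] at h1
    have h2 : N (β j) ≤ N (β i₀) := hβsort i₀ j hj
    have h3 : N (α i₀) ≤ N (α k) := hαsort k i₀ hk
    have h4 : ‖(c j k : ℚ_[p])‖ * N (α k) < N (α k) :=
      lt_of_le_of_lt (h1.trans h2) (lt_of_lt_of_le hi₀ h3)
    have hlt : ‖(c j k : ℚ_[p])‖ < 1 := by
      by_contra hge
      push_neg at hge
      nlinarith [hαpos k]
    rwa [← PadicInt.norm_def] at hlt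
  have hdvd : (p : ℤ_[p]) ∣ (Matrix.of c : Matrix (Fin n) (Fin n) ℤ_[p]).det := by
    rw [Matrix.det_apply]
    apply Finset.dvd_sum
    intro σ _
    have hex : ∃ i : Fin n, i ≤ i₀ ∧ i₀ ≤ σ i := by
      by_contra hno
      push_neg at hno
      have hinj : Set.InjOn σ (Finset.Iic i₀) := fun a _ b _ h => σ.injective h
      have hmaps : ∀ a ∈ Finset.Iic i₀, σ a ∈ Finset.Iio i₀ := by
        intro a ha
        rw [Finset.mem_Iic] at ha
        rw [Finset.mem_Iio]
        exact hno a ha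
      have hcard := Finset.card_le_card_of_injOn σ hmaps hinj
      rw [Fin.card_Iic, Fin.card_Iio] at hcard
      omega
    obtain ⟨i, hi1, hi2⟩ := hex
    have hp : (p : ℤ_[p]) ∣ ∏ i, Matrix.of c (σ i) i :=
      Dvd.dvd.trans (hsmall (σ i) i hi2 hi1) (Finset.dvd_prod_of_mem _ (Finset.mem_univ i))
    rw [Units.smul_def, zsmul_eq_mul]
    exact Dvd.dvd.mul_left hp _
  have hlt1 : ‖(Matrix.of c : Matrix (Fin n) (Fin n) ℤ_[p]).det‖ < 1 :=
    (PadicInt.norm_lt_one_iff_dvd _).mpr hdvd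
  rw [hnorm1] at hlt1
  exact lt_irrefl _ hlt1

theorem stmt5 {p : ℕ} [Fact p.Prime] {V : Type*} [AddCommGroup V] [Module ℚ_[p] V]
    [FiniteDimensional ℚ_[p] V]
    (N : V → ℝ)
    (hnonneg : ∀ v, 0 ≤ N v)
    (hzero : ∀ v, N v = 0 ↔ v = 0)
    (hsmul : ∀ (x : ℚ_[p]) (v : V), N (x • v) = ‖x‖ * N v)
    (hna : ∀ v w, N (v + w) ≤ max (N v) (N w))
    {n : ℕ} (hn : 0 < n) (α β : Fin n → V)
    (hαindep : LinearIndependent ℚ_[p] α) (hβindep : LinearIndependent ℚ_[p] β)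
    -- α and β generate the same ℤ_p-lattice L
    (hlat : (Set.range fun a : Fin n → ℤ_[p] => ∑ i, ((a i : ℚ_[p])) • α i)
          = (Set.range fun a : Fin n → ℤ_[p] => ∑ i, ((a i : ℚ_[p])) • β i))
    -- both are orthogonal
    (hαorth : ∀ a : Fin n → ℚ_[p],
        N (∑ i, a i • α i) =
          Finset.univ.sup' ⟨⟨0, hn⟩, Finset.mem_univ _⟩ (fun i => N (a i • α i)))
    (hβorth : ∀ a : Fin n → ℚ_[p],
        N (∑ i, a i • β i) =
          Finset.univ.sup' ⟨⟨0, hn⟩, Finset.mem_univ _⟩ (fun i => N (a i • β i)))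
    -- sorted by decreasing norm
    (hαsort : ∀ i j : Fin n, i ≤ j → N (α j) ≤ N (α i))
    (hβsort : ∀ i j : Fin n, i ≤ j → N (β j) ≤ N (β i)) :
    ∀ i, N (α i) = N (β i) := by
  intro i
  exact le_antisymm
    (stmt5_aux N hnonneg hzero hsmul hn α β hαindep hlat hαorth hαsort hβsort i)
    (stmt5_aux N hnonneg hzero hsmul hn β α hβindep hlat.symm hβorth hβsort hαsort i)
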